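/- For increasing events A, B ⊆ {0,1}^n and any configuration x ∈ {0,1}^n, the pair (A,B) occurs disjointly on (x, x̄) if and only if x ∈ A ∩ B̄, where x̄ denotes the coordinatewise complement of x and B̄ = {x̄ : x ∈ B}. -/
import Mathlib

open Finset

/-- `(x, I)` is a witness for `A`: every configuration agreeing with `x` on `I` lies in `A`. -/
def IsWitness {n : ℕ} (A : Set (Fin n → Bool)) (x : Fin n → Bool) (I : Finset (Fin n)) : Prop :=
  ∀ y : Fin n → Bool, (∀ i ∈ I, y i = x i) → y ∈ A

/-- `(A, B)` occurs disjointly on `(x, y)`: there are disjoint witness sets `I` for `A` in `x`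
and `J` for `B` in `y`. -/
def OccursDisjointly {n : ℕ} (A B : Set (Fin n → Bool)) (x y : Fin n → Bool) : Prop :=
  ∃ I J : Finset (Fin n), Disjoint I J ∧ IsWitness A x I ∧ IsWitness B y J

/-- An event is increasing if it is upward closed in the coordinatewise order. -/
def IncreasingEvent {n : ℕ} (A : Set (Fin n → Bool)) : Prop :=
  ∀ x y : Fin n → Bool, (∀ i, x i ≤ y i) → x ∈ A → y ∈ A

/-- Coordinatewise colour flip. -/
def flipConf {n : ℕ} (x : Fin n → Bool) : Fin n → Bool := fun i => !(x i)

/-- `B̄ = {x̄ : x ∈ B}`. -/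
def flipSet {n : ℕ} (B : Set (Fin n → Bool)) : Set (Fin n → Bool) := flipConf '' B

/-- For increasing events `A, B`, `(A,B)` occurs disjointly on `(x, x̄)` iff `x ∈ A ∩ B̄`. -/
theorem occursDisjointly_flip_iff {n : ℕ} (A B : Set (Fin n → Bool))
    (hA : IncreasingEvent A) (hB : IncreasingEvent B) (x : Fin n → Bool) :
    OccursDisjointly A B x (flipConf x) ↔ x ∈ A ∩ flipSet B := by
  constructor
  · rintro ⟨I, J, -, hI, hJ⟩
    refine ⟨hI x fun _ _ => rfl, flipConf x, hJ (flipConf x) fun _ _ => rfl, ?_⟩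
    funext i; simp [flipConf]
  · rintro ⟨hxA, z, hzB, hz⟩
    have hzx : flipConf x = z := by
      rw [← hz]; funext i; simp [flipConf]
    refine ⟨Finset.univ.filter (fun i => x i = true),
      Finset.univ.filter (fun i => x i = false), ?_, ?_, ?_⟩
    · simp only [Finset.disjoint_filter]
      intro i _ h h'; simp [h] at h'
    · intro y hy
      refine hA x y (fun i => ?_) hxA
      by_cases h : x i = true
      · rw [hy i (by simp [h]), h]
      · simp [Bool.not_eq_true] at h; simp [h]
    · intro y hy
      refine hB (flipConf x) y (fun i => ?_) (hzx ▸ hzB)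
      by_cases h : x i = false
      · rw [hy i (by simp [h])]
      · simp [Bool.not_eq_false] at h; simp [flipConf, h]
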